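/- arXiv:2012.01418 — 2 statements merged into one kernel-verified Lean document; each statement's English description precedes it below -/
import Mathlib

section
/- (Theorem 1 of the paper.) Define, for each t ∈ {1,…,T}, each count vector m with ∑_a m(a) = n, and each prescription γ : 𝒳 → 𝒰: the cost ℓ̂_t(m, γ) := (1/|H(m)|) ∑_{x ∈ H(m)} ℓ_t(x, (γ(x^1),…,γ(x^n))), and the transition kernel T̂_t(m, γ), the law of emp(i ↦ f_t(x0 i, γ(x0 i), W i, m)) for any fixed x0 ∈ H(m) with W : Fin n → 𝒲 i.i.d. with PMF P_{W_t} (this law is independent of the choice of x0 ∈ H(m)). Define value functions by V_{T+1}(m) := 0 and, for t = T,…,1, V_t(m) := min over γ : 𝒳 → 𝒰 of [ℓ̂_t(m, γ) + ∑_{m'} T̂_t(m, γ)(m') · V_{t+1}(m')]. Then: (i) for every coordination strategy ψ, the expected total cost Ĵ(ψ) = E[∑_{t=1}^T ℓ_t(X_t, (Γ_t(X_t^1),…,Γ_t(X_t^n)))] satisfies Ĵ(ψ) ≥ ∑_m P(Z_1 = m) V_1(m); and (ii) any Markov strategy ψ* with ψ*_t depending only on z_t and ψ*_t(z_t) attaining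 the minimum in the definition of V_t(z_t) achieves Ĵ(ψ*) = ∑_m P(Z_1 = m) V_1(m). Hence there is no loss of optimality in restricting attention to Markov coordination strategies Γ_t = ψ_t(Z_t). -/
open scoped ENNReal

def emp {X : Type*} [DecidableEq X] {n : ℕ} (x : Fin n → X) : X → ℕ :=
  fun a => (Finset.univ.filter (fun i => x i = a)).card

def Hset {X : Type*} [Fintype X] [DecidableEq X] (n : ℕ) (m : X → ℕ) : Finset (Fin n → X) :=
  Finset.univ.filter (fun x => emp x = m)

noncomputable def iid {W : Type*} [Fintype W] (n : ℕ) (ν : PMF W) : PMF (Fin n → W) :=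
  PMF.ofFintype (fun w => ∏ i, ν (w i)) (by
    have h : ∑ j : W, ν j = 1 := by rw [← tsum_fintype (L := SummationFilter.unconditional _)]; exact ν.tsum_coe
    rw [← Fintype.prod_sum]; simp [h])

variable {X U W : Type*} [Fintype X] [DecidableEq X] [Nonempty X]
  [Fintype U] [Nonempty U] [Fintype W]

/-- Closed-loop law of the state trajectory `(X_0, …, X_t)` under coordination strategy `ψ`. -/
noncomputable def hist (n : ℕ) (PX : PMF X) (PW : ℕ → PMF W)
    (f : ℕ → X → U → W → (X → ℕ) → X)
    (ψ : (t : ℕ) → (Fin (t + 1) → (X → ℕ)) → X → U) :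
    (t : ℕ) → PMF (Fin (t + 1) → (Fin n → X))
  | 0 => (iid n PX).map (fun x _ => x)
  | t + 1 =>
    (hist n PX PW f ψ t).bind (fun xs =>
      (iid n (PW t)).map (fun w =>
        Fin.snoc xs (fun i =>
          f t (xs (Fin.last t) i)
            (ψ t (fun s => emp (xs s)) (xs (Fin.last t) i))
            (w i) (emp (xs (Fin.last t))))))

/-- The (finite) space of achievable mean fields: empirical count vectors of `n` subsystems. -/
def Mspace (X : Type*) [Fintype X] [DecidableEq X] (n : ℕ) : Finset (X → ℕ) :=
  Finset.univ.image (fun x : Fin n → X => emp x)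

/-- `ℓ̂_t(m, γ)`: average of the per-step cost over the uniform distribution on `H(m)`. -/
noncomputable def lhat (n : ℕ) (ℓ : ℕ → (Fin n → X) → (Fin n → U) → ℝ)
    (t : ℕ) (m : X → ℕ) (γ : X → U) : ℝ :=
  (∑ x ∈ Hset n m, ℓ t x (fun i => γ (x i))) / ((Hset n m).card : ℝ)

/-- `T̂_t(m, γ)(m')`: the mean-field transition kernel, i.e. the probability (under i.i.d.
noise) that the next empirical count vector is `m'`, averaged over representatives in `H(m)`
(the averaging is immaterial: the value is the same for every representative). -/
noncomputable def That (n : ℕ) (PW : ℕ → PMF W) (f : ℕ → X → U → W → (X → ℕ) → X)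
    (t : ℕ) (m : X → ℕ) (γ : X → U) (m' : X → ℕ) : ℝ≥0∞ :=
  (∑ x0 ∈ Hset n m,
    ∑ w ∈ Finset.univ.filter
      (fun w : Fin n → W => emp (fun i => f t (x0 i) (γ (x0 i)) (w i) m) = m'),
      iid n (PW t) w) / ((Hset n m).card : ℝ≥0∞)

/-- The dynamic-programming value functions `V_t`, with `V_T ≡ 0`. -/
noncomputable def V (n T : ℕ) (PW : ℕ → PMF W) (f : ℕ → X → U → W → (X → ℕ) → X)
    (ℓ : ℕ → (Fin n → X) → (Fin n → U) → ℝ) (t : ℕ) : (X → ℕ) → ℝ :=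
  if t < T then fun m =>
    Finset.univ.inf' Finset.univ_nonempty (fun γ : X → U =>
      lhat n ℓ t m γ +
        ∑ m' ∈ Mspace X n, (That n PW f t m γ m').toReal * V n T PW f ℓ (t + 1) m')
  else fun _ => 0
termination_by T - t

/-- Expected total cost of a coordination strategy over horizon `T`. -/
noncomputable def Jhat (n T : ℕ) (PX : PMF X) (PW : ℕ → PMF W)
    (f : ℕ → X → U → W → (X → ℕ) → X) (ℓ : ℕ → (Fin n → X) → (Fin n → U) → ℝ)
    (ψ : (t : ℕ) → (Fin (t + 1) → (X → ℕ)) → X → U) : ℝ :=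
  ∑ t ∈ Finset.range T, ∑ xs : Fin (t + 1) → (Fin n → X),
    (hist n PX PW f ψ t xs).toReal *
      ℓ t (xs (Fin.last t)) (fun i => ψ t (fun s => emp (xs s)) (xs (Fin.last t) i))


section Aux

open Finset

variable {X U W : Type*} [Fintype X] [DecidableEq X] [Nonempty X]
  [Fintype U] [Nonempty U] [Fintype W]

lemma emp_sum {n : ℕ} (x : Fin n → X) : ∑ a, emp x a = n := by
  classical
  have h := Finset.card_eq_sum_card_fiberwise
    (f := x) (s := Finset.univ) (t := Finset.univ) (fun i _ => Finset.mem_univ _)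
  simpa [emp, Finset.card_univ] using h.symm

lemma emp_comp {n : ℕ} (x : Fin n → X) (σ : Equiv.Perm (Fin n)) :
    emp (fun i => x (σ i)) = emp x := by
  funext a
  show (Finset.univ.filter fun i => x (σ i) = a).card
      = (Finset.univ.filter fun i => x i = a).card
  refine Finset.card_bij (fun i _ => σ i) ?_ ?_ ?_
  · intro i hi
    simp only [Finset.mem_filter, Finset.mem_univ, true_and] at hi ⊢
    exact hi
  · intro i _ j _ h
    exact σ.injective h
  · intro j hj
    simp only [Finset.mem_filter, Finset.mem_univ, true_and] at hj ⊢
    exact ⟨σ.symm j, by simpa using hj, by simp⟩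

lemma exists_perm {n : ℕ} {x y : Fin n → X} (h : emp x = emp y) :
    ∃ σ : Equiv.Perm (Fin n), ∀ i, y i = x (σ i) := by
  classical
  have hcard : ∀ a, Fintype.card {i // y i = a} = Fintype.card {i // x i = a} := by
    intro a
    have h' := congrFun h a
    simp only [emp] at h'
    simp [Fintype.card_subtype, h']
  let e : ∀ a, {i // y i = a} ≃ {i // x i = a} := fun a => Fintype.equivOfCardEq (hcard a)
  refine ⟨(Equiv.sigmaFiberEquiv y).symm.trans ((Equiv.sigmaCongrRight e).trans
    (Equiv.sigmaFiberEquiv x)), fun i => ?_⟩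
  simp only [Equiv.trans_apply, Equiv.sigmaFiberEquiv, Equiv.coe_fn_symm_mk,
    Equiv.sigmaCongrRight_apply, Equiv.coe_fn_mk, Sigma.map]
  exact ((e (y i)) ⟨i, rfl⟩).2.symm

lemma iid_apply {A : Type*} [Fintype A] {n : ℕ} (ν : PMF A) (w : Fin n → A) :
    iid n ν w = ∏ i, ν (w i) := by
  simp [iid]

lemma iid_comp {A : Type*} [Fintype A] {n : ℕ} (ν : PMF A) (σ : Equiv.Perm (Fin n))
    (w : Fin n → A) : iid n ν (fun i => w (σ i)) = iid n ν w := by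
  rw [iid_apply, iid_apply]
  exact Equiv.prod_comp σ fun i => ν (w i)

/-- The permutation equivalence on `Fin n`-indexed tuples. -/
def compEquiv {A : Type*} {n : ℕ} (σ : Equiv.Perm (Fin n)) : (Fin n → A) ≃ (Fin n → A) where
  toFun w := fun i => w (σ i)
  invFun w := fun i => w (σ.symm i)
  left_inv w := by funext i; simp
  right_inv w := by funext i; simp

lemma q_perm {n : ℕ} (PW : ℕ → PMF W) (f : ℕ → X → U → W → (X → ℕ) → X)
    (t : ℕ) (m : X → ℕ) (γ : X → U) (m' : X → ℕ) {x0 x1 : Fin n → X}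
    (h : emp x0 = emp x1) :
    (∑ w ∈ Finset.univ.filter (fun w : Fin n → W =>
        emp (fun i => f t (x1 i) (γ (x1 i)) (w i) m) = m'), iid n (PW t) w)
    = ∑ w ∈ Finset.univ.filter (fun w : Fin n → W =>
        emp (fun i => f t (x0 i) (γ (x0 i)) (w i) m) = m'), iid n (PW t) w := by
  obtain ⟨σ, hσ⟩ := exists_perm h
  rw [Finset.sum_filter, Finset.sum_filter]
  refine (Fintype.sum_equiv (compEquiv σ) _ _ fun w => ?_).symm
  have hcond : emp (fun i => f t (x1 i) (γ (x1 i)) (w (σ i)) m)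
      = emp (fun i => f t (x0 i) (γ (x0 i)) (w i) m) := by
    have : (fun i => f t (x1 i) (γ (x1 i)) (w (σ i)) m)
        = fun i => f t (x0 (σ i)) (γ (x0 (σ i))) (w (σ i)) m := by
      funext i; rw [hσ i]
    rw [this]
    exact emp_comp (fun i => f t (x0 i) (γ (x0 i)) (w i) m) σ
  have hiid : iid n (PW t) (fun i => w (σ i)) = iid n (PW t) w := iid_comp _ σ w
  simp only [compEquiv, Equiv.coe_fn_mk, hcond, hiid]

lemma That_eq {n : ℕ} (PW : ℕ → PMF W) (f : ℕ → X → U → W → (X → ℕ) → X)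
    (t : ℕ) (m : X → ℕ) (γ : X → U) (m' : X → ℕ) {x0 : Fin n → X}
    (hx0 : x0 ∈ Hset n m) :
    (∑ w ∈ Finset.univ.filter
        (fun w : Fin n → W => emp (fun i => f t (x0 i) (γ (x0 i)) (w i) m) = m'),
        iid n (PW t) w) = That n PW f t m γ m' := by
  classical
  have hemp : emp x0 = m := by simpa [Hset] using hx0
  have hconst : ∀ x ∈ Hset n m,
      (∑ w ∈ Finset.univ.filter
        (fun w : Fin n → W => emp (fun i => f t (x i) (γ (x i)) (w i) m) = m'),
        iid n (PW t) w)
      = ∑ w ∈ Finset.univ.filter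
        (fun w : Fin n → W => emp (fun i => f t (x0 i) (γ (x0 i)) (w i) m) = m'),
        iid n (PW t) w := by
    intro x hx
    have hempx : emp x = m := by simpa [Hset] using hx
    exact q_perm PW f t m γ m' (hemp.trans hempx.symm)
  have hcard : ((Hset n m).card : ℝ≥0∞) ≠ 0 := by
    simp only [ne_eq, Nat.cast_eq_zero, Finset.card_eq_zero]
    intro hcontra
    rw [hcontra] at hx0
    exact absurd hx0 (Finset.notMem_empty x0)
  rw [That, Finset.sum_congr rfl hconst, Finset.sum_const, nsmul_eq_mul, mul_comm,
    mul_div_assoc, ENNReal.div_self hcard (ENNReal.natCast_ne_top _), mul_one]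

end Aux

section Aux2

open Finset

set_option linter.unusedSectionVars false

variable {X U W : Type*} [Fintype X] [DecidableEq X] [Nonempty X]
  [Fintype U] [Nonempty U] [Fintype W]

/-- The next-state map of the closed-loop dynamics. -/
def nextst (n : ℕ) (f : ℕ → X → U → W → (X → ℕ) → X)
    (ψ : (t : ℕ) → (Fin (t + 1) → (X → ℕ)) → X → U) (t : ℕ)
    (xs : Fin (t + 1) → Fin n → X) (w : Fin n → W) : Fin n → X :=
  fun i => f t (xs (Fin.last t) i) (ψ t (fun s => emp (xs s)) (xs (Fin.last t) i)) (w i)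
    (emp (xs (Fin.last t)))

/-- Appending the next state to a trajectory. -/
def stepf (n : ℕ) (f : ℕ → X → U → W → (X → ℕ) → X)
    (ψ : (t : ℕ) → (Fin (t + 1) → (X → ℕ)) → X → U) (t : ℕ)
    (xs : Fin (t + 1) → Fin n → X) (w : Fin n → W) : Fin (t + 2) → Fin n → X :=
  Fin.snoc xs (nextst n f ψ t xs w)

lemma hist_succ (n : ℕ) (PX : PMF X) (PW : ℕ → PMF W)
    (f : ℕ → X → U → W → (X → ℕ) → X)
    (ψ : (t : ℕ) → (Fin (t + 1) → (X → ℕ)) → X → U) (t : ℕ) :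
    hist n PX PW f ψ (t + 1)
      = (hist n PX PW f ψ t).bind (fun xs => (iid n (PW t)).map (stepf n f ψ t xs)) := rfl

lemma hist_zero_apply (n : ℕ) (PX : PMF X) (PW : ℕ → PMF W)
    (f : ℕ → X → U → W → (X → ℕ) → X)
    (ψ : (t : ℕ) → (Fin (t + 1) → (X → ℕ)) → X → U) (xs : Fin 1 → Fin n → X) :
    hist n PX PW f ψ 0 xs = iid n PX (xs 0) := by
  classical
  show ((iid n PX).map (fun x _ => x)) xs = iid n PX (xs 0)
  rw [PMF.map_apply, tsum_fintype]
  rw [Finset.sum_eq_single (xs 0)]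
  · rw [if_pos]
    funext s
    rw [Subsingleton.elim s 0]
  · intro b _ hb
    rw [if_neg]
    intro hc
    exact hb (congrFun hc 0).symm
  · simp

lemma hist_succ_apply (n : ℕ) (PX : PMF X) (PW : ℕ → PMF W)
    (f : ℕ → X → U → W → (X → ℕ) → X)
    (ψ : (t : ℕ) → (Fin (t + 1) → (X → ℕ)) → X → U) (t : ℕ)
    (xs' : Fin (t + 2) → Fin n → X) :
    hist n PX PW f ψ (t + 1) xs'
      = ∑ xs : Fin (t + 1) → Fin n → X, hist n PX PW f ψ t xs *
          ∑ w : Fin n → W, if xs' = stepf n f ψ t xs w then iid n (PW t) w else 0 := by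
  classical
  rw [hist_succ, PMF.bind_apply, tsum_fintype]
  refine Finset.sum_congr rfl fun xs _ => ?_
  rw [PMF.map_apply, tsum_fintype]
  refine congrArg _ (Finset.sum_congr rfl fun w _ => ?_)
  congr

/-- permutation action on trajectories -/
def pT {A : Type*} {n t : ℕ} (σ : Equiv.Perm (Fin n)) (xs : Fin t → Fin n → A) :
    Fin t → Fin n → A := fun s i => xs s (σ i)

def permT {A : Type*} {n t : ℕ} (σ : Equiv.Perm (Fin n)) :
    (Fin t → Fin n → A) ≃ (Fin t → Fin n → A) where
  toFun := pT σ
  invFun := pT σ.symm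
  left_inv xs := by funext s i; simp [pT]
  right_inv xs := by funext s i; simp [pT]

lemma empT_pT {n t : ℕ} (σ : Equiv.Perm (Fin n)) (xs : Fin t → Fin n → X) :
    (fun s => emp (pT σ xs s)) = fun s => emp (xs s) :=
  funext fun s => emp_comp (xs s) σ

lemma stepf_pT (n : ℕ) (f : ℕ → X → U → W → (X → ℕ) → X)
    (ψ : (t : ℕ) → (Fin (t + 1) → (X → ℕ)) → X → U) (t : ℕ) (σ : Equiv.Perm (Fin n))
    (xs : Fin (t + 1) → Fin n → X) (w : Fin n → W) :
    stepf n f ψ t (pT σ xs) (fun i => w (σ i)) = pT σ (stepf n f ψ t xs w) := by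
  funext s
  refine Fin.lastCases ?_ (fun j => ?_) s
  · have h1 : stepf n f ψ t (pT σ xs) (fun i => w (σ i)) (Fin.last (t + 1))
        = nextst n f ψ t (pT σ xs) (fun i => w (σ i)) := Fin.snoc_last _ _
    have h2 : pT σ (stepf n f ψ t xs w) (Fin.last (t + 1))
        = fun i => nextst n f ψ t xs w (σ i) := by
      funext i
      show (Fin.snoc xs (nextst n f ψ t xs w) : Fin (t+2) → Fin n → X) (Fin.last (t+1)) (σ i)
          = nextst n f ψ t xs w (σ i)
      rw [Fin.snoc_last]
    rw [h1, h2]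
    funext i
    simp only [nextst, pT]
    rw [show (fun s => emp (pT σ xs s)) = fun s => emp (xs s) from empT_pT σ xs,
        show emp (pT σ xs (Fin.last t)) = emp (xs (Fin.last t)) from emp_comp _ σ]
  · have h1 : stepf n f ψ t (pT σ xs) (fun i => w (σ i)) (Fin.castSucc j) = pT σ xs j :=
      Fin.snoc_castSucc _ _ _
    have h2 : pT σ (stepf n f ψ t xs w) (Fin.castSucc j) = fun i => xs j (σ i) := by
      funext i
      show (Fin.snoc xs (nextst n f ψ t xs w) : Fin (t+2) → Fin n → X) (Fin.castSucc j) (σ i)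
          = xs j (σ i)
      rw [Fin.snoc_castSucc]
    rw [h1, h2]
    rfl

lemma hist_perm (n : ℕ) (PX : PMF X) (PW : ℕ → PMF W)
    (f : ℕ → X → U → W → (X → ℕ) → X)
    (ψ : (t : ℕ) → (Fin (t + 1) → (X → ℕ)) → X → U) (σ : Equiv.Perm (Fin n)) :
    ∀ (t : ℕ) (xs : Fin (t + 1) → Fin n → X),
      hist n PX PW f ψ t (pT σ xs) = hist n PX PW f ψ t xs
  | 0, xs => by
    rw [hist_zero_apply, hist_zero_apply]
    exact iid_comp PX σ (xs 0)
  | (t + 1), xs' => by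
    classical
    rw [hist_succ_apply, hist_succ_apply]
    refine (Fintype.sum_equiv (permT σ) _ _ fun xs => ?_).symm
    have hinj : ∀ a b : Fin (t + 2) → Fin n → X, (pT σ a = pT σ b) ↔ a = b :=
      fun a b => ⟨fun h => (permT σ).injective h, fun h => by rw [h]⟩
    have hhist : hist n PX PW f ψ t (pT σ xs) = hist n PX PW f ψ t xs :=
      hist_perm n PX PW f ψ σ t xs
    show hist n PX PW f ψ t xs * _ = hist n PX PW f ψ t (pT σ xs) * _
    rw [hhist]
    congr 1
    refine Fintype.sum_equiv (compEquiv σ) _ _ fun w => ?_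
    show (if xs' = stepf n f ψ t xs w then iid n (PW t) w else 0)
        = if pT σ xs' = stepf n f ψ t (pT σ xs) (fun i => w (σ i)) then
            iid n (PW t) (fun i => w (σ i)) else 0
    rw [stepf_pT, iid_comp]
    exact (if_congr (hinj xs' (stepf n f ψ t xs w)) rfl rfl).symm

lemma A_perm (n : ℕ) (PX : PMF X) (PW : ℕ → PMF W)
    (f : ℕ → X → U → W → (X → ℕ) → X)
    (ψ : (t : ℕ) → (Fin (t + 1) → (X → ℕ)) → X → U) (t : ℕ)
    (zvec : Fin (t + 1) → X → ℕ) {x y : Fin n → X} (hxy : emp x = emp y) :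
    ∑ xs : Fin (t + 1) → Fin n → X,
      (if (fun s => emp (xs s)) = zvec ∧ xs (Fin.last t) = x
        then (hist n PX PW f ψ t xs).toReal else 0)
    = ∑ xs : Fin (t + 1) → Fin n → X,
      (if (fun s => emp (xs s)) = zvec ∧ xs (Fin.last t) = y
        then (hist n PX PW f ψ t xs).toReal else 0) := by
  classical
  obtain ⟨σ, hσ⟩ := exists_perm hxy
  refine Fintype.sum_equiv (permT σ) _ _ fun xs => ?_
  have h1 : (fun s => emp (pT σ xs s)) = fun s => emp (xs s) := empT_pT σ xs
  have h2 : (pT σ xs (Fin.last t) = y) ↔ (xs (Fin.last t) = x) := by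
    constructor
    · intro hh
      funext j
      have hj := congrFun hh (σ.symm j)
      simp only [pT] at hj
      rw [hσ (σ.symm j), Equiv.apply_symm_apply] at hj
      exact hj
    · intro hh
      funext i
      simp only [pT, hh]
      exact (hσ i).symm
  show (if (fun s => emp (xs s)) = zvec ∧ xs (Fin.last t) = x
        then (hist n PX PW f ψ t xs).toReal else 0)
      = if (fun s => emp (pT σ xs s)) = zvec ∧ pT σ xs (Fin.last t) = y
        then (hist n PX PW f ψ t (pT σ xs)).toReal else 0
  rw [hist_perm, h1]
  exact (if_congr (and_congr_right fun _ => h2) rfl rfl).symm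

end Aux2


section Aux3

open Finset

set_option linter.unusedSectionVars false

variable {X U W : Type*} [Fintype X] [DecidableEq X] [Nonempty X]
  [Fintype U] [Nonempty U] [Fintype W]

lemma pmf_bind_sum {α β : Type*} [Fintype α] [Fintype β] (p : PMF α) (q : α → PMF β)
    (g : β → ℝ) :
    ∑ b, ((p.bind q) b).toReal * g b
      = ∑ a, (p a).toReal * ∑ b, ((q a b).toReal * g b) := by
  have h1 : ∀ b, ((p.bind q) b).toReal = ∑ a, (p a).toReal * ((q a b).toReal) := by
    intro b
    rw [PMF.bind_apply, tsum_fintype,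
      ENNReal.toReal_sum (fun a _ => ENNReal.mul_ne_top (PMF.apply_ne_top p a)
        (PMF.apply_ne_top (q a) b))]
    exact Finset.sum_congr rfl fun a _ => ENNReal.toReal_mul
  simp_rw [h1, Finset.sum_mul, Finset.mul_sum]
  rw [Finset.sum_comm]
  exact Finset.sum_congr rfl fun a _ => Finset.sum_congr rfl fun b _ => by ring

lemma pmf_map_sum {α β : Type*} [Fintype α] [Fintype β] [DecidableEq β] (p : PMF α)
    (h : α → β) (g : β → ℝ) :
    ∑ b, ((p.map h) b).toReal * g b = ∑ a, (p a).toReal * g (h a) := by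
  classical
  have h1 : ∀ b, ((p.map h) b).toReal = ∑ a, if b = h a then (p a).toReal else 0 := by
    intro b
    rw [PMF.map_apply, tsum_fintype,
      ENNReal.toReal_sum (fun a _ => by split <;> simp [PMF.apply_ne_top])]
    exact Finset.sum_congr rfl fun a _ => by split <;> simp
  simp_rw [h1, Finset.sum_mul]
  rw [Finset.sum_comm]
  refine Finset.sum_congr rfl fun a _ => ?_
  rw [Finset.sum_eq_single (h a)]
  · simp
  · intro b _ hb
    rw [if_neg hb, zero_mul]
  · intro hb
    exact absurd (Finset.mem_univ _) hb

lemma avg_const {α : Type*} (s : Finset α) (S G : α → ℝ)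
    (hS : ∀ x ∈ s, ∀ y ∈ s, S x = S y) :
    ∑ x ∈ s, S x * G x = ∑ x ∈ s, S x * ((∑ y ∈ s, G y) / (s.card : ℝ)) := by
  rcases s.eq_empty_or_nonempty with h | h
  · simp [h]
  · obtain ⟨r, hr⟩ := h
    have h1 : ∀ x ∈ s, S x = S r := fun x hx => hS x hx r hr
    have hc : (s.card : ℝ) ≠ 0 := Nat.cast_ne_zero.mpr (Finset.card_ne_zero_of_mem hr)
    calc ∑ x ∈ s, S x * G x = ∑ x ∈ s, S r * G x :=
          Finset.sum_congr rfl fun x hx => by rw [h1 x hx]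
      _ = S r * ∑ y ∈ s, G y := by rw [← Finset.mul_sum]
      _ = ∑ x ∈ s, S r * ((∑ y ∈ s, G y) / (s.card : ℝ)) := by
          rw [Finset.sum_const, nsmul_eq_mul]
          field_simp
          try ring
      _ = ∑ x ∈ s, S x * ((∑ y ∈ s, G y) / (s.card : ℝ)) :=
          Finset.sum_congr rfl fun x hx => by rw [h1 x hx]

lemma collapse_sum (n : ℕ) (PX : PMF X) (PW : ℕ → PMF W)
    (f : ℕ → X → U → W → (X → ℕ) → X)
    (ψ : (t : ℕ) → (Fin (t + 1) → (X → ℕ)) → X → U) (t : ℕ)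
    (H : (Fin (t + 1) → X → ℕ) → (Fin n → X) → ℝ) :
    ∑ zvec ∈ Fintype.piFinset (fun _ : Fin (t + 1) => Mspace X n), ∑ x : Fin n → X,
      (∑ xs : Fin (t + 1) → Fin n → X,
        if (fun s => emp (xs s)) = zvec ∧ xs (Fin.last t) = x
          then (hist n PX PW f ψ t xs).toReal else 0) * H zvec x
    = ∑ xs : Fin (t + 1) → Fin n → X,
        (hist n PX PW f ψ t xs).toReal * H (fun s => emp (xs s)) (xs (Fin.last t)) := by
  classical
  have step1 : ∀ (zvec : Fin (t + 1) → X → ℕ) (x : Fin n → X),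
      (∑ xs : Fin (t + 1) → Fin n → X,
        if (fun s => emp (xs s)) = zvec ∧ xs (Fin.last t) = x
          then (hist n PX PW f ψ t xs).toReal else 0) * H zvec x
      = ∑ xs : Fin (t + 1) → Fin n → X,
          (if (fun s => emp (xs s)) = zvec ∧ xs (Fin.last t) = x
            then (hist n PX PW f ψ t xs).toReal * H zvec x else 0) := by
    intro zvec x
    rw [Finset.sum_mul]
    refine Finset.sum_congr rfl fun xs _ => ?_
    rw [ite_mul, zero_mul]
  simp_rw [step1]
  rw [Finset.sum_comm]
  have step2 : ∀ x : Fin n → X,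
      (∑ zvec ∈ Fintype.piFinset (fun _ : Fin (t + 1) => Mspace X n),
        ∑ xs : Fin (t + 1) → Fin n → X,
        (if (fun s => emp (xs s)) = zvec ∧ xs (Fin.last t) = x
          then (hist n PX PW f ψ t xs).toReal * H zvec x else 0))
      = ∑ xs : Fin (t + 1) → Fin n → X,
        ∑ zvec ∈ Fintype.piFinset (fun _ : Fin (t + 1) => Mspace X n),
        (if (fun s => emp (xs s)) = zvec ∧ xs (Fin.last t) = x
          then (hist n PX PW f ψ t xs).toReal * H zvec x else 0) :=
    fun x => Finset.sum_comm
  simp_rw [step2]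
  rw [Finset.sum_comm]
  refine Finset.sum_congr rfl fun xs _ => ?_
  rw [Finset.sum_eq_single (xs (Fin.last t))]
  · rw [Finset.sum_eq_single (fun s => emp (xs s))]
    · rw [if_pos ⟨rfl, rfl⟩]
    · intro zvec _ hz
      rw [if_neg]
      rintro ⟨h1, -⟩
      exact hz h1.symm
    · intro hz
      exact absurd (Fintype.mem_piFinset.mpr fun s =>
        Finset.mem_image_of_mem _ (Finset.mem_univ (xs s))) hz
  · intro x _ hx
    apply Finset.sum_eq_zero
    intro zvec _
    rw [if_neg]
    rintro ⟨-, h2⟩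
    exact hx h2.symm
  · intro hx
    exact absurd (Finset.mem_univ _) hx

lemma group_avg (n : ℕ) (PX : PMF X) (PW : ℕ → PMF W)
    (f : ℕ → X → U → W → (X → ℕ) → X)
    (ψ : (t : ℕ) → (Fin (t + 1) → (X → ℕ)) → X → U) (t : ℕ)
    (G : (Fin (t + 1) → X → ℕ) → (Fin n → X) → ℝ) :
    ∑ xs : Fin (t + 1) → Fin n → X,
      (hist n PX PW f ψ t xs).toReal * G (fun s => emp (xs s)) (xs (Fin.last t))
    = ∑ xs : Fin (t + 1) → Fin n → X,
      (hist n PX PW f ψ t xs).toReal *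
        ((∑ y ∈ Hset n (emp (xs (Fin.last t))), G (fun s => emp (xs s)) y) /
          ((Hset n (emp (xs (Fin.last t)))).card : ℝ)) := by
  classical
  have e1 := collapse_sum n PX PW f ψ t G
  have e2 := collapse_sum n PX PW f ψ t (fun zvec x =>
    (∑ y ∈ Hset n (emp x), G zvec y) / ((Hset n (emp x)).card : ℝ))
  have MAIN : ∑ zvec ∈ Fintype.piFinset (fun _ : Fin (t + 1) => Mspace X n),
      ∑ x : Fin n → X,
      (∑ xs : Fin (t + 1) → Fin n → X,
        if (fun s => emp (xs s)) = zvec ∧ xs (Fin.last t) = x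
          then (hist n PX PW f ψ t xs).toReal else 0) * G zvec x
      = ∑ zvec ∈ Fintype.piFinset (fun _ : Fin (t + 1) => Mspace X n),
      ∑ x : Fin n → X,
      (∑ xs : Fin (t + 1) → Fin n → X,
        if (fun s => emp (xs s)) = zvec ∧ xs (Fin.last t) = x
          then (hist n PX PW f ψ t xs).toReal else 0) *
        ((∑ y ∈ Hset n (emp x), G zvec y) / ((Hset n (emp x)).card : ℝ)) := by
    refine Finset.sum_congr rfl fun zvec _ => ?_
    have hzero : ∀ x : Fin n → X, emp x ≠ zvec (Fin.last t) →
        (∑ xs : Fin (t + 1) → Fin n → X,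
          if (fun s => emp (xs s)) = zvec ∧ xs (Fin.last t) = x
            then (hist n PX PW f ψ t xs).toReal else 0) = 0 := by
      intro x hx
      apply Finset.sum_eq_zero
      intro xs _
      rw [if_neg]
      rintro ⟨h1, h2⟩
      have hc : emp (xs (Fin.last t)) = zvec (Fin.last t) := congrFun h1 (Fin.last t)
      rw [h2] at hc
      exact hx hc
    have hmem : ∀ x ∈ Hset n (zvec (Fin.last t)), emp x = zvec (Fin.last t) := by
      intro x hx
      exact (Finset.mem_filter.mp hx).2
    have hout1 : ∀ x ∈ (Finset.univ : Finset (Fin n → X)),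
        x ∉ Hset n (zvec (Fin.last t)) →
        (∑ xs : Fin (t + 1) → Fin n → X,
          if (fun s => emp (xs s)) = zvec ∧ xs (Fin.last t) = x
            then (hist n PX PW f ψ t xs).toReal else 0) * G zvec x = 0 := by
      intro x _ hx
      rw [hzero x (by simpa [Hset] using hx), zero_mul]
    have hout2 : ∀ x ∈ (Finset.univ : Finset (Fin n → X)),
        x ∉ Hset n (zvec (Fin.last t)) →
        (∑ xs : Fin (t + 1) → Fin n → X,
          if (fun s => emp (xs s)) = zvec ∧ xs (Fin.last t) = x
            then (hist n PX PW f ψ t xs).toReal else 0) *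
          ((∑ y ∈ Hset n (emp x), G zvec y) / ((Hset n (emp x)).card : ℝ)) = 0 := by
      intro x _ hx
      rw [hzero x (by simpa [Hset] using hx), zero_mul]
    rw [← Finset.sum_subset (Finset.subset_univ (Hset n (zvec (Fin.last t)))) hout1,
        ← Finset.sum_subset (Finset.subset_univ (Hset n (zvec (Fin.last t)))) hout2]
    have hS : ∀ x ∈ Hset n (zvec (Fin.last t)), ∀ y ∈ Hset n (zvec (Fin.last t)),
        (∑ xs : Fin (t + 1) → Fin n → X,
          if (fun s => emp (xs s)) = zvec ∧ xs (Fin.last t) = x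
            then (hist n PX PW f ψ t xs).toReal else 0)
        = (∑ xs : Fin (t + 1) → Fin n → X,
          if (fun s => emp (xs s)) = zvec ∧ xs (Fin.last t) = y
            then (hist n PX PW f ψ t xs).toReal else 0) := by
      intro x hx y hy
      exact A_perm n PX PW f ψ t zvec (by rw [hmem x hx, hmem y hy])
    calc ∑ x ∈ Hset n (zvec (Fin.last t)),
          (∑ xs : Fin (t + 1) → Fin n → X,
            if (fun s => emp (xs s)) = zvec ∧ xs (Fin.last t) = x
              then (hist n PX PW f ψ t xs).toReal else 0) * G zvec x
        = ∑ x ∈ Hset n (zvec (Fin.last t)),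
          (∑ xs : Fin (t + 1) → Fin n → X,
            if (fun s => emp (xs s)) = zvec ∧ xs (Fin.last t) = x
              then (hist n PX PW f ψ t xs).toReal else 0) *
            ((∑ y ∈ Hset n (zvec (Fin.last t)), G zvec y) /
              ((Hset n (zvec (Fin.last t))).card : ℝ)) := avg_const _ _ _ hS
      _ = _ := by
          refine Finset.sum_congr rfl fun x hx => ?_
          rw [hmem x hx]
  exact e1.symm.trans (MAIN.trans e2)

lemma step_sum (n : ℕ) (PX : PMF X) (PW : ℕ → PMF W)
    (f : ℕ → X → U → W → (X → ℕ) → X)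
    (ψ : (t : ℕ) → (Fin (t + 1) → (X → ℕ)) → X → U) (t : ℕ) (V' : (X → ℕ) → ℝ) :
    ∑ xs' : Fin (t + 2) → Fin n → X,
      (hist n PX PW f ψ (t + 1) xs').toReal * V' (emp (xs' (Fin.last (t + 1))))
    = ∑ xs : Fin (t + 1) → Fin n → X, (hist n PX PW f ψ t xs).toReal *
        ∑ m' ∈ Mspace X n,
          (∑ w ∈ Finset.univ.filter (fun w : Fin n → W =>
              emp (fun i => f t (xs (Fin.last t) i)
                (ψ t (fun s => emp (xs s)) (xs (Fin.last t) i)) (w i)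
                (emp (xs (Fin.last t)))) = m'),
            iid n (PW t) w).toReal * V' m' := by
  classical
  simp only [hist_succ]
  rw [pmf_bind_sum]
  refine Finset.sum_congr rfl fun xs _ => ?_
  congr 1
  rw [pmf_map_sum]
  have hlast : ∀ w : Fin n → W, stepf n f ψ t xs w (Fin.last (t + 1))
      = fun i => f t (xs (Fin.last t) i) (ψ t (fun s => emp (xs s)) (xs (Fin.last t) i)) (w i)
          (emp (xs (Fin.last t))) := fun w => Fin.snoc_last _ _
  simp_rw [hlast]
  rw [← Finset.sum_fiberwise_of_maps_to (g := fun w : Fin n → W =>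
      emp (fun i => f t (xs (Fin.last t) i)
        (ψ t (fun s => emp (xs s)) (xs (Fin.last t) i)) (w i) (emp (xs (Fin.last t)))))
      (t := Mspace X n) (fun w _ => Finset.mem_image_of_mem _ (Finset.mem_univ _)) _]
  refine Finset.sum_congr rfl fun m' _ => ?_
  rw [ENNReal.toReal_sum (fun w _ => PMF.apply_ne_top _ _), Finset.sum_mul]
  refine Finset.sum_congr rfl fun w hw => ?_
  rw [(Finset.mem_filter.mp hw).2]

end Aux3


section Aux4

open Finset

set_option linter.unusedSectionVars false
set_option maxHeartbeats 1000000

variable {X U W : Type*} [Fintype X] [DecidableEq X] [Nonempty X]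
  [Fintype U] [Nonempty U] [Fintype W]

lemma one_step (n T : ℕ) (PX : PMF X) (PW : ℕ → PMF W)
    (f : ℕ → X → U → W → (X → ℕ) → X) (ℓ : ℕ → (Fin n → X) → (Fin n → U) → ℝ)
    (ψ : (t : ℕ) → (Fin (t + 1) → (X → ℕ)) → X → U) (t : ℕ) :
    (∑ xs : Fin (t + 1) → Fin n → X, (hist n PX PW f ψ t xs).toReal *
        ℓ t (xs (Fin.last t)) (fun i => ψ t (fun s => emp (xs s)) (xs (Fin.last t) i)))
      + ∑ xs' : Fin (t + 2) → Fin n → X,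
          (hist n PX PW f ψ (t + 1) xs').toReal *
            V n T PW f ℓ (t + 1) (emp (xs' (Fin.last (t + 1))))
    = ∑ xs : Fin (t + 1) → Fin n → X, (hist n PX PW f ψ t xs).toReal *
        (lhat n ℓ t (emp (xs (Fin.last t))) (ψ t (fun s => emp (xs s))) +
          ∑ m' ∈ Mspace X n,
            (That n PW f t (emp (xs (Fin.last t))) (ψ t (fun s => emp (xs s))) m').toReal *
              V n T PW f ℓ (t + 1) m') := by
  classical
  rw [step_sum n PX PW f ψ t (V n T PW f ℓ (t + 1))]
  have hsub : ∀ xs : Fin (t + 1) → Fin n → X,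
      (∑ m' ∈ Mspace X n,
        (∑ w ∈ Finset.univ.filter (fun w : Fin n → W =>
            emp (fun i => f t (xs (Fin.last t) i)
              (ψ t (fun s => emp (xs s)) (xs (Fin.last t) i)) (w i)
              (emp (xs (Fin.last t)))) = m'),
          iid n (PW t) w).toReal * V n T PW f ℓ (t + 1) m')
      = ∑ m' ∈ Mspace X n,
          (That n PW f t (emp (xs (Fin.last t))) (ψ t (fun s => emp (xs s))) m').toReal *
            V n T PW f ℓ (t + 1) m' := by
    intro xs
    refine Finset.sum_congr rfl fun m' _ => ?_
    rw [That_eq PW f t (emp (xs (Fin.last t))) (ψ t (fun s => emp (xs s))) m'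
      (Finset.mem_filter.mpr ⟨Finset.mem_univ _, rfl⟩)]
  simp_rw [hsub]
  rw [← Finset.sum_add_distrib]
  have hcomb : ∀ xs : Fin (t + 1) → Fin n → X, (hist n PX PW f ψ t xs).toReal *
        ℓ t (xs (Fin.last t)) (fun i => ψ t (fun s => emp (xs s)) (xs (Fin.last t) i))
      + (hist n PX PW f ψ t xs).toReal * (∑ m' ∈ Mspace X n,
          (That n PW f t (emp (xs (Fin.last t))) (ψ t (fun s => emp (xs s))) m').toReal *
            V n T PW f ℓ (t + 1) m')
      = (hist n PX PW f ψ t xs).toReal *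
          (ℓ t (xs (Fin.last t)) (fun i => ψ t (fun s => emp (xs s)) (xs (Fin.last t) i))
            + ∑ m' ∈ Mspace X n,
              (That n PW f t (emp (xs (Fin.last t))) (ψ t (fun s => emp (xs s))) m').toReal *
                V n T PW f ℓ (t + 1) m') := fun xs => (mul_add _ _ _).symm
  simp_rw [hcomb]
  have hG : (∑ xs : Fin (t + 1) → Fin n → X, (hist n PX PW f ψ t xs).toReal *
          (ℓ t (xs (Fin.last t)) (fun i => ψ t (fun s => emp (xs s)) (xs (Fin.last t) i))
            + ∑ m' ∈ Mspace X n,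
              (That n PW f t (emp (xs (Fin.last t))) (ψ t (fun s => emp (xs s))) m').toReal *
                V n T PW f ℓ (t + 1) m'))
      = ∑ xs : Fin (t + 1) → Fin n → X, (hist n PX PW f ψ t xs).toReal *
          ((∑ y ∈ Hset n (emp (xs (Fin.last t))),
            (ℓ t y (fun i => ψ t (fun s => emp (xs s)) (y i))
              + ∑ m' ∈ Mspace X n,
                (That n PW f t (emp (xs (Fin.last t))) (ψ t (fun s => emp (xs s))) m').toReal *
                  V n T PW f ℓ (t + 1) m')) /
            ((Hset n (emp (xs (Fin.last t)))).card : ℝ)) :=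
    group_avg n PX PW f ψ t (fun zvec x =>
      ℓ t x (fun i => ψ t zvec (x i))
        + ∑ m' ∈ Mspace X n,
            (That n PW f t (zvec (Fin.last t)) (ψ t zvec) m').toReal *
              V n T PW f ℓ (t + 1) m')
  rw [hG]
  refine Finset.sum_congr rfl fun xs _ => ?_
  congr 1
  have hxmem : xs (Fin.last t) ∈ Hset n (emp (xs (Fin.last t))) :=
    Finset.mem_filter.mpr ⟨Finset.mem_univ _, rfl⟩
  have hc : ((Hset n (emp (xs (Fin.last t)))).card : ℝ) ≠ 0 :=
    Nat.cast_ne_zero.mpr (Finset.card_ne_zero_of_mem hxmem)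
  rw [Finset.sum_add_distrib, Finset.sum_const, nsmul_eq_mul, add_div, lhat]
  congr 1
  rw [mul_comm, mul_div_assoc, div_self hc, mul_one]

lemma main_le (n T : ℕ) (PX : PMF X) (PW : ℕ → PMF W)
    (f : ℕ → X → U → W → (X → ℕ) → X) (ℓ : ℕ → (Fin n → X) → (Fin n → U) → ℝ)
    (ψ : (t : ℕ) → (Fin (t + 1) → (X → ℕ)) → X → U) :
    ∀ (k t : ℕ), t + k = T →
      ∑ xs : Fin (t + 1) → Fin n → X,
        (hist n PX PW f ψ t xs).toReal * V n T PW f ℓ t (emp (xs (Fin.last t)))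
      ≤ ∑ s ∈ Finset.Ico t T, ∑ xs : Fin (s + 1) → Fin n → X,
          (hist n PX PW f ψ s xs).toReal *
            ℓ s (xs (Fin.last s)) (fun i => ψ s (fun s' => emp (xs s')) (xs (Fin.last s) i)) := by
  intro k
  induction k with
  | zero =>
    intro t ht
    have hT : t = T := by omega
    subst hT
    have hV : V n t PW f ℓ t = fun _ => 0 := by rw [V]; simp
    simp [hV, Finset.Ico_self]
  | succ k ih =>
    intro t ht
    have h1 : t < T := by omega
    have IH := ih (t + 1) (by omega)
    rw [Finset.sum_eq_sum_Ico_succ_bot h1]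
    have key : (∑ xs : Fin (t + 1) → Fin n → X,
          (hist n PX PW f ψ t xs).toReal * V n T PW f ℓ t (emp (xs (Fin.last t))))
        ≤ (∑ xs : Fin (t + 1) → Fin n → X, (hist n PX PW f ψ t xs).toReal *
            ℓ t (xs (Fin.last t)) (fun i => ψ t (fun s => emp (xs s)) (xs (Fin.last t) i)))
          + ∑ xs' : Fin (t + 2) → Fin n → X,
              (hist n PX PW f ψ (t + 1) xs').toReal *
                V n T PW f ℓ (t + 1) (emp (xs' (Fin.last (t + 1)))) := by
      rw [one_step n T PX PW f ℓ ψ t]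
      refine Finset.sum_le_sum fun xs _ => ?_
      refine mul_le_mul_of_nonneg_left ?_ ENNReal.toReal_nonneg
      rw [V, if_pos h1]
      exact Finset.inf'_le _ (Finset.mem_univ (ψ t (fun s => emp (xs s))))
    exact le_trans key (add_le_add_right IH _)

lemma main_eq (n T : ℕ) (PX : PMF X) (PW : ℕ → PMF W)
    (f : ℕ → X → U → W → (X → ℕ) → X) (ℓ : ℕ → (Fin n → X) → (Fin n → U) → ℝ)
    (ψ : (t : ℕ) → (Fin (t + 1) → (X → ℕ)) → X → U)
    (hψ : ∀ t, t < T → ∀ xs : Fin (t + 1) → Fin n → X,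
      V n T PW f ℓ t (emp (xs (Fin.last t)))
        = lhat n ℓ t (emp (xs (Fin.last t))) (ψ t (fun s => emp (xs s))) +
          ∑ m' ∈ Mspace X n,
            (That n PW f t (emp (xs (Fin.last t))) (ψ t (fun s => emp (xs s))) m').toReal *
              V n T PW f ℓ (t + 1) m') :
    ∀ (k t : ℕ), t + k = T →
      ∑ xs : Fin (t + 1) → Fin n → X,
        (hist n PX PW f ψ t xs).toReal * V n T PW f ℓ t (emp (xs (Fin.last t)))
      = ∑ s ∈ Finset.Ico t T, ∑ xs : Fin (s + 1) → Fin n → X,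
          (hist n PX PW f ψ s xs).toReal *
            ℓ s (xs (Fin.last s)) (fun i => ψ s (fun s' => emp (xs s')) (xs (Fin.last s) i)) := by
  intro k
  induction k with
  | zero =>
    intro t ht
    have hT : t = T := by omega
    subst hT
    have hV : V n t PW f ℓ t = fun _ => 0 := by rw [V]; simp
    simp [hV, Finset.Ico_self]
  | succ k ih =>
    intro t ht
    have h1 : t < T := by omega
    have IH := ih (t + 1) (by omega)
    rw [Finset.sum_eq_sum_Ico_succ_bot h1, ← IH]
    have hVsub := hψ t h1
    simp_rw [hVsub]
    exact (one_step n T PX PW f ℓ ψ t).symm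

lemma init_sum (n : ℕ) (PX : PMF X) (PW : ℕ → PMF W)
    (f : ℕ → X → U → W → (X → ℕ) → X)
    (ψ : (t : ℕ) → (Fin (t + 1) → (X → ℕ)) → X → U) (F : (X → ℕ) → ℝ) :
    ∑ xs : Fin 1 → Fin n → X,
      (hist n PX PW f ψ 0 xs).toReal * F (emp (xs (Fin.last 0)))
    = ∑ m ∈ Mspace X n, (∑ x ∈ Hset n m, iid n PX x).toReal * F m := by
  classical
  have hset_eq : ∀ m : X → ℕ,
      Finset.univ.filter (fun x : Fin n → X => emp x = m) = Hset n m := by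
    intro m
    ext x
    simp [Hset]
  have h1 : ∑ xs : Fin 1 → Fin n → X,
      (hist n PX PW f ψ 0 xs).toReal * F (emp (xs (Fin.last 0)))
      = ∑ x : Fin n → X, (iid n PX x).toReal * F (emp x) := by
    refine Fintype.sum_equiv (Equiv.funUnique (Fin 1) (Fin n → X)) _ _ fun xs => ?_
    show (hist n PX PW f ψ 0 xs).toReal * F (emp (xs (Fin.last 0)))
        = (iid n PX (xs default)).toReal * F (emp (xs default))
    rw [hist_zero_apply]
    have e0 : xs (Fin.last 0) = xs default := congrArg xs (Subsingleton.elim _ _)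
    have e1 : xs 0 = xs default := congrArg xs (Subsingleton.elim _ _)
    rw [e0, e1]
  rw [h1, ← Finset.sum_fiberwise_of_maps_to (g := fun x : Fin n → X => emp x)
      (t := Mspace X n) (fun x _ => Finset.mem_image_of_mem _ (Finset.mem_univ x)) _]
  refine Finset.sum_congr rfl fun m _ => ?_
  rw [hset_eq m, ENNReal.toReal_sum (fun x _ => PMF.apply_ne_top _ _), Finset.sum_mul]
  refine Finset.sum_congr rfl fun x hx => ?_
  have hx' : emp x = m := by simpa [Hset] using hx
  rw [hx']

end Aux4

/-- Theorem 1: (0) the mean-field kernel does not depend on the representative `x0 ∈ H(m)`;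
(i) every coordination strategy has expected cost at least `∑_m P(Z_1 = m) V_1(m)`; and
(ii) any Markov strategy attaining the minimum in the dynamic program achieves this bound,
so there is no loss of optimality in Markov coordination strategies `Γ_t = ψ_t(Z_t)`. -/
theorem stmt7 (n T : ℕ) (hn : 1 ≤ n) (PX : PMF X) (PW : ℕ → PMF W)
    (f : ℕ → X → U → W → (X → ℕ) → X) (ℓ : ℕ → (Fin n → X) → (Fin n → U) → ℝ) :
    (∀ (t : ℕ) (m : X → ℕ), (∑ a, m a) = n → ∀ (γ : X → U) (m' : X → ℕ),
      ∀ x0 ∈ Hset n m,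
        (∑ w ∈ Finset.univ.filter
          (fun w : Fin n → W => emp (fun i => f t (x0 i) (γ (x0 i)) (w i) m) = m'),
          iid n (PW t) w) = That n PW f t m γ m') ∧
    (∀ ψ : (t : ℕ) → (Fin (t + 1) → (X → ℕ)) → X → U,
      (∑ m ∈ Mspace X n, (∑ x ∈ Hset n m, iid n PX x).toReal * V n T PW f ℓ 0 m)
        ≤ Jhat n T PX PW f ℓ ψ) ∧
    (∀ ψstar : ℕ → (X → ℕ) → X → U,
      (∀ t < T, ∀ m ∈ Mspace X n,
        V n T PW f ℓ t m = lhat n ℓ t m (ψstar t m) +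
          ∑ m' ∈ Mspace X n,
            (That n PW f t m (ψstar t m) m').toReal * V n T PW f ℓ (t + 1) m') →
      Jhat n T PX PW f ℓ (fun t zs => ψstar t (zs (Fin.last t)))
        = ∑ m ∈ Mspace X n, (∑ x ∈ Hset n m, iid n PX x).toReal * V n T PW f ℓ 0 m) := by
    classical
  refine ⟨fun t m hm γ m' x0 hx0 => That_eq PW f t m γ m' hx0, fun ψ => ?_, fun ψstar hopt => ?_⟩
  · have h := main_le n T PX PW f ℓ ψ T 0 (by omega)
    rw [init_sum n PX PW f ψ (V n T PW f ℓ 0)] at h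
    unfold Jhat
    rw [Finset.range_eq_Ico]
    exact h
  · have hψ : ∀ t, t < T → ∀ xs : Fin (t + 1) → Fin n → X,
        V n T PW f ℓ t (emp (xs (Fin.last t)))
          = lhat n ℓ t (emp (xs (Fin.last t)))
              ((fun u (zs : Fin (u + 1) → X → ℕ) => ψstar u (zs (Fin.last u))) t
                (fun s => emp (xs s))) +
            ∑ m' ∈ Mspace X n,
              (That n PW f t (emp (xs (Fin.last t)))
                ((fun u (zs : Fin (u + 1) → X → ℕ) => ψstar u (zs (Fin.last u))) t
                  (fun s => emp (xs s))) m').toReal *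
                V n T PW f ℓ (t + 1) m' :=
      fun t h1 xs => hopt t h1 (emp (xs (Fin.last t)))
        (Finset.mem_image_of_mem _ (Finset.mem_univ (xs (Fin.last t))))
    have h := main_eq n T PX PW f ℓ
      (fun u (zs : Fin (u + 1) → X → ℕ) => ψstar u (zs (Fin.last u))) hψ T 0 (by omega)
    rw [init_sum] at h
    unfold Jhat
    rw [Finset.range_eq_Ico]
    exact h.symm
end

section
/- (Inductive step of Lemma 2, standalone form.) Let 𝒳 and 𝒲 be finite types, n ∈ ℕ, let m : 𝒳 → ℕ be a count vector with ∑_a m(a) = n and H(m) nonempty, let ν be a PMF on 𝒲, and let F : 𝒳 → 𝒲 → 𝒳. Let μ' be the law of the profile X' = (i ↦ F(X i)(W i)), where X is uniform on H(m) and W : Fin n → 𝒲 has i.i.d. coordinates of PMF ν, independent of X. Then for every count vector m' with μ'(H(m')) > 0, the conditional distribution of X' given the event {emp(X') = m'} is the uniform distribution on H(m'): for every x' ∈ H(m'), μ'(x') / μ'(H(m')) = 1 / |H(m')|. -/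
open scoped ENNReal

lemma emp_comp_perm {X : Type*} [DecidableEq X] {n : ℕ} (x : Fin n → X)
    (σ : Equiv.Perm (Fin n)) : emp (x ∘ σ) = emp x := by
  funext a
  unfold emp
  apply Finset.card_bij' (fun i _ => σ i) (fun j _ => σ.symm j) <;> simp

lemma count_ofFn {X : Type*} [DecidableEq X] {n : ℕ} (x : Fin n → X) (a : X) :
    (List.ofFn x).count a = emp x a := by
  induction n with
  | zero => simp [emp]
  | succ k ih =>
    rw [List.ofFn_succ, List.count_cons, ih]
    unfold emp
    rw [Finset.card_filter, Finset.card_filter, Fin.sum_univ_succ]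
    simp [add_comm, Fin.sum_univ_succ]

lemma exists_perm_of_perm {X : Type*} {n : ℕ} (x y : Fin n → X)
    (h : (List.ofFn x).Perm (List.ofFn y)) : ∃ σ : Equiv.Perm (Fin n), x ∘ σ = y := by
  induction n with
  | zero => exact ⟨1, funext fun i => i.elim0⟩
  | succ k ih =>
    have hy0 : y 0 ∈ List.ofFn x := h.mem_iff.2 (by rw [List.mem_ofFn]; exact ⟨0, rfl⟩)
    rw [List.mem_ofFn] at hy0
    obtain ⟨j, hj⟩ := hy0
    set x₁ : Fin (k+1) → X := x ∘ Equiv.swap 0 j with hx₁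
    have hperm : (List.ofFn x₁).Perm (List.ofFn y) :=
      ((Equiv.swap 0 j).ofFn_comp_perm x).trans h
    have hx₁0 : x₁ 0 = y 0 := by simp [hx₁, Equiv.swap_apply_left, hj]
    rw [List.ofFn_succ, List.ofFn_succ, hx₁0] at hperm
    have htail := hperm.cons_inv
    obtain ⟨τ, hτ⟩ := ih (fun i => x₁ i.succ) (fun i => y i.succ) htail
    refine ⟨Equiv.swap 0 j * Equiv.Perm.decomposeFin.symm (0, τ), funext fun i => ?_⟩
    induction i using Fin.cases with
    | zero => simp [Equiv.Perm.decomposeFin_symm_apply_zero, hj]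
    | succ i =>
      have := congrFun hτ i
      simp only [Function.comp_apply] at this ⊢
      rw [Equiv.Perm.mul_apply, Equiv.Perm.decomposeFin_symm_apply_succ]
      simpa [hx₁] using this

lemma exists_perm_of_emp_eq {X : Type*} [DecidableEq X] {n : ℕ} (x y : Fin n → X)
    (h : emp x = emp y) : ∃ σ : Equiv.Perm (Fin n), x ∘ σ = y := by
  apply exists_perm_of_perm
  rw [List.perm_iff_count]
  intro a
  rw [count_ofFn, count_ofFn, h]

lemma iid_comp_perm {W : Type*} [Fintype W] {n : ℕ} (ν : PMF W) (w : Fin n → W)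
    (σ : Equiv.Perm (Fin n)) : iid n ν (w ∘ σ) = iid n ν w := by
  simp only [iid, PMF.ofFintype_apply, Function.comp_apply]
  exact Equiv.prod_comp σ (fun i => ν (w i))

lemma mu_comp_perm {X W : Type*} [Fintype X] [DecidableEq X] [Fintype W] {n : ℕ}
    (m : X → ℕ) (hne : (Hset n m).Nonempty) (ν : PMF W) (F : X → W → X)
    (y : Fin n → X) (σ : Equiv.Perm (Fin n)) :
    ((PMF.uniformOfFinset (Hset n m) hne).bind
        (fun x => (iid n ν).map (fun w => fun i => F (x i) (w i)))) (y ∘ σ)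
    = ((PMF.uniformOfFinset (Hset n m) hne).bind
        (fun x => (iid n ν).map (fun w => fun i => F (x i) (w i)))) y := by
  classical
  rw [PMF.bind_apply, PMF.bind_apply, tsum_fintype, tsum_fintype]
  apply Fintype.sum_equiv (Equiv.arrowCongr σ (Equiv.refl X))
  intro x
  have hxσ : (Equiv.arrowCongr σ (Equiv.refl X)) x = x ∘ σ.symm := by
    funext i; simp [Equiv.arrowCongr]
  rw [hxσ]
  congr 1
  · -- uniform invariance
    rw [PMF.uniformOfFinset_apply, PMF.uniformOfFinset_apply]
    have hmem : x ∈ Hset n m ↔ (x ∘ ⇑σ.symm) ∈ Hset n m := by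
      simp [Hset, emp_comp_perm x σ.symm]
    by_cases hx : x ∈ Hset n m
    · rw [if_pos hx, if_pos (hmem.1 hx)]
    · rw [if_neg hx, if_neg (fun h => hx (hmem.2 h))]
  · -- map invariance
    rw [PMF.map_apply, PMF.map_apply, tsum_fintype, tsum_fintype]
    apply Fintype.sum_equiv (Equiv.arrowCongr σ (Equiv.refl W))
    intro w
    have hwσ : (Equiv.arrowCongr σ (Equiv.refl W)) w = w ∘ σ.symm := by
      funext i; simp [Equiv.arrowCongr]
    rw [hwσ]
    have hcond : (y ∘ ⇑σ = fun i => F (x i) (w i))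
        ↔ (y = fun i => F ((x ∘ ⇑σ.symm) i) ((w ∘ ⇑σ.symm) i)) := by
      constructor
      · intro h; funext i
        have := congrFun h (σ.symm i)
        simpa using this
      · intro h; funext i
        have := congrFun h (σ i)
        simpa using this
    by_cases h1 : y ∘ ⇑σ = fun i => F (x i) (w i)
    · rw [if_pos h1, if_pos (hcond.1 h1), iid_comp_perm]
    · rw [if_neg h1, if_neg (fun h => h1 (hcond.2 h))]

/-- Inductive step of Lemma 2: if `X` is uniform on `H(m)` and `X' = (i ↦ F (X i) (W i))` with
`W` an independent i.i.d. noise vector, then the conditional law of `X'` given `emp X' = m'`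
(whenever this event has positive probability) is uniform on `H(m')`. -/
theorem stmt15 {X W : Type*} [Fintype X] [DecidableEq X] [Fintype W] {n : ℕ}
    (m : X → ℕ) (hm : ∑ a, m a = n) (hne : (Hset n m).Nonempty)
    (ν : PMF W) (F : X → W → X)
    (μ' : PMF (Fin n → X))
    (hμ' : μ' = (PMF.uniformOfFinset (Hset n m) hne).bind
        (fun x => (iid n ν).map (fun w => fun i => F (x i) (w i)))) :
    ∀ m' : X → ℕ, 0 < ∑ y ∈ Hset n m', μ' y →
      ∀ x' ∈ Hset n m', μ' x' / (∑ y ∈ Hset n m', μ' y) = 1 / ((Hset n m').card : ℝ≥0∞) := by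
  intro m' hpos x' hx'
  have hconst : ∀ y ∈ Hset n m', μ' y = μ' x' := by
    intro y hy
    have hemp : emp x' = emp y := by
      simp only [Hset, Finset.mem_filter] at hx' hy
      rw [hx'.2, hy.2]
    obtain ⟨σ, hσ⟩ := exists_perm_of_emp_eq x' y hemp
    rw [← hσ, hμ', mu_comp_perm, ← hμ']
  have hsum : ∑ y ∈ Hset n m', μ' y = ((Hset n m').card : ℝ≥0∞) * μ' x' := by
    rw [Finset.sum_congr rfl hconst, Finset.sum_const, nsmul_eq_mul]
  have h0 : μ' x' ≠ 0 := by
    intro h; rw [hsum, h, mul_zero] at hpos; exact lt_irrefl 0 hpos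
  have htop : μ' x' ≠ ⊤ := PMF.apply_ne_top μ' x'
  rw [hsum, mul_comm]
  calc μ' x' / (μ' x' * ((Hset n m').card : ℝ≥0∞))
      = (μ' x' * 1) / (μ' x' * ((Hset n m').card : ℝ≥0∞)) := by rw [mul_one]
    _ = 1 / ((Hset n m').card : ℝ≥0∞) := ENNReal.mul_div_mul_left _ _ h0 htop
end
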